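/- The slack function S(t1,t2) = C·(t2 - t1) - Σ_a h_a · MI(t1,t2,a), for fixed t1, is continuous and piecewise linear in t2, and every local minimum t2* of t2 ↦ S(t1,t2) with negative left derivative and positive right derivative satisfies: there exists an activity j such that the left derivative of t2 ↦ MI(t1,t2,j) at t2* strictly exceeds its right derivative. -/

import Mathlib

open Set Filter Topology

/-- Minimum intersection of an activity (sMin, sMax, p) with interval [t1,t2]. -/
noncomputable def MI (sMin sMax p t1 t2 : ℝ) : ℝ :=
  max 0 (min (min p (t2 - t1)) (min (sMin + p - t1) (t2 - sMax)))

/-- Left derivative. -/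
noncomputable def leftD (f : ℝ → ℝ) (x : ℝ) : ℝ := derivWithin f (Set.Iio x) x

/-- Right derivative. -/
noncomputable def rightD (f : ℝ → ℝ) (x : ℝ) : ℝ := derivWithin f (Set.Ioi x) x

private lemma evAff_tendsto {f : ℝ → ℝ} {x m : ℝ} {s : Set ℝ}
    (hf : ∀ᶠ t in 𝓝[s] x, f t = f x + m * (t - x)) :
    Filter.Tendsto f (𝓝[s] x) (𝓝 (f x)) := by
  have h1 : Filter.Tendsto (fun t => f x + m * (t - x)) (𝓝[s] x) (𝓝 (f x)) := by
    have c : ContinuousAt (fun t : ℝ => f x + m * (t - x)) x := by fun_prop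
    have := c.tendsto.mono_left (nhdsWithin_le_nhds (s := s))
    simpa using this
  exact h1.congr' (hf.mono fun t ht => ht.symm)

private lemma evAff_min_right {f g : ℝ → ℝ} {x a b : ℝ}
    (hf : ∀ᶠ t in 𝓝[Ici x] x, f t = f x + a * (t - x))
    (hg : ∀ᶠ t in 𝓝[Ici x] x, g t = g x + b * (t - x)) :
    ∃ m, ∀ᶠ t in 𝓝[Ici x] x, min (f t) (g t) = min (f x) (g x) + m * (t - x) := by
  rcases lt_trichotomy (f x) (g x) with hlt | heq | hgt
  · refine ⟨a, ?_⟩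
    have h1 := (evAff_tendsto hf).eventually_lt (evAff_tendsto hg) hlt
    filter_upwards [hf, h1] with t hft hlt'
    rw [min_eq_left hlt'.le, min_eq_left hlt.le, hft]
  · refine ⟨min a b, ?_⟩
    filter_upwards [hf, hg, self_mem_nhdsWithin] with t hft hgt hts
    have hst : (0:ℝ) ≤ t - x := sub_nonneg.mpr hts
    rw [hft, hgt, heq]
    rcases le_total a b with hab | hab
    · rw [min_eq_left hab, min_eq_left (by nlinarith), min_self]
    · rw [min_eq_right hab, min_eq_right (by nlinarith), min_self]
  · refine ⟨b, ?_⟩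
    have h1 := (evAff_tendsto hg).eventually_lt (evAff_tendsto hf) hgt
    filter_upwards [hg, h1] with t hgt' hlt'
    rw [min_eq_right hlt'.le, min_eq_right hgt.le, hgt']

private lemma evAff_max_right {f g : ℝ → ℝ} {x a b : ℝ}
    (hf : ∀ᶠ t in 𝓝[Ici x] x, f t = f x + a * (t - x))
    (hg : ∀ᶠ t in 𝓝[Ici x] x, g t = g x + b * (t - x)) :
    ∃ m, ∀ᶠ t in 𝓝[Ici x] x, max (f t) (g t) = max (f x) (g x) + m * (t - x) := by
  rcases lt_trichotomy (f x) (g x) with hlt | heq | hgt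
  · refine ⟨b, ?_⟩
    have h1 := (evAff_tendsto hf).eventually_lt (evAff_tendsto hg) hlt
    filter_upwards [hg, h1] with t hgt' hlt'
    rw [max_eq_right hlt'.le, max_eq_right hlt.le, hgt']
  · refine ⟨max a b, ?_⟩
    filter_upwards [hf, hg, self_mem_nhdsWithin] with t hft hgt hts
    have hst : (0:ℝ) ≤ t - x := sub_nonneg.mpr hts
    rw [hft, hgt, heq]
    rcases le_total a b with hab | hab
    · rw [max_eq_right hab, max_eq_right (by nlinarith), max_self]
    · rw [max_eq_left hab, max_eq_left (by nlinarith), max_self]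
  · refine ⟨a, ?_⟩
    have h1 := (evAff_tendsto hg).eventually_lt (evAff_tendsto hf) hgt
    filter_upwards [hf, h1] with t hft hlt'
    rw [max_eq_left hlt'.le, max_eq_left hgt.le, hft]

private lemma evAff_min_left {f g : ℝ → ℝ} {x a b : ℝ}
    (hf : ∀ᶠ t in 𝓝[Iic x] x, f t = f x + a * (t - x))
    (hg : ∀ᶠ t in 𝓝[Iic x] x, g t = g x + b * (t - x)) :
    ∃ m, ∀ᶠ t in 𝓝[Iic x] x, min (f t) (g t) = min (f x) (g x) + m * (t - x) := by
  rcases lt_trichotomy (f x) (g x) with hlt | heq | hgt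
  · refine ⟨a, ?_⟩
    have h1 := (evAff_tendsto hf).eventually_lt (evAff_tendsto hg) hlt
    filter_upwards [hf, h1] with t hft hlt'
    rw [min_eq_left hlt'.le, min_eq_left hlt.le, hft]
  · refine ⟨max a b, ?_⟩
    filter_upwards [hf, hg, self_mem_nhdsWithin] with t hft hgt hts
    have hst : t - x ≤ 0 := sub_nonpos.mpr hts
    rw [hft, hgt, heq]
    rcases le_total a b with hab | hab
    · rw [max_eq_right hab, min_eq_right (by nlinarith), min_self]
    · rw [max_eq_left hab, min_eq_left (by nlinarith), min_self]
  · refine ⟨b, ?_⟩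
    have h1 := (evAff_tendsto hg).eventually_lt (evAff_tendsto hf) hgt
    filter_upwards [hg, h1] with t hgt' hlt'
    rw [min_eq_right hlt'.le, min_eq_right hgt.le, hgt']

private lemma evAff_max_left {f g : ℝ → ℝ} {x a b : ℝ}
    (hf : ∀ᶠ t in 𝓝[Iic x] x, f t = f x + a * (t - x))
    (hg : ∀ᶠ t in 𝓝[Iic x] x, g t = g x + b * (t - x)) :
    ∃ m, ∀ᶠ t in 𝓝[Iic x] x, max (f t) (g t) = max (f x) (g x) + m * (t - x) := by
  rcases lt_trichotomy (f x) (g x) with hlt | heq | hgt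
  · refine ⟨b, ?_⟩
    have h1 := (evAff_tendsto hf).eventually_lt (evAff_tendsto hg) hlt
    filter_upwards [hg, h1] with t hgt' hlt'
    rw [max_eq_right hlt'.le, max_eq_right hlt.le, hgt']
  · refine ⟨min a b, ?_⟩
    filter_upwards [hf, hg, self_mem_nhdsWithin] with t hft hgt hts
    have hst : t - x ≤ 0 := sub_nonpos.mpr hts
    rw [hft, hgt, heq]
    rcases le_total a b with hab | hab
    · rw [min_eq_left hab, max_eq_left (by nlinarith), max_self]
    · rw [min_eq_right hab, max_eq_right (by nlinarith), max_self]
  · refine ⟨a, ?_⟩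
    have h1 := (evAff_tendsto hg).eventually_lt (evAff_tendsto hf) hgt
    filter_upwards [hf, h1] with t hft hlt'
    rw [max_eq_left hlt'.le, max_eq_left hgt.le, hft]

private lemma evAff_MI_right (sm sx pp t1 x : ℝ) :
    ∃ m, ∀ᶠ t in 𝓝[Ici x] x, MI sm sx pp t1 t = MI sm sx pp t1 x + m * (t - x) := by
  have hc : ∀ (k : ℝ), ∀ᶠ t in 𝓝[Ici x] x,
      (fun _ : ℝ => k) t = (fun _ : ℝ => k) x + 0 * (t - x) :=
    fun k => Filter.Eventually.of_forall (fun t => by ring)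
  have hid : ∀ (k : ℝ), ∀ᶠ t in 𝓝[Ici x] x,
      (fun s : ℝ => s - k) t = (fun s : ℝ => s - k) x + 1 * (t - x) :=
    fun k => Filter.Eventually.of_forall (fun t => by ring)
  obtain ⟨m1, h1⟩ := evAff_min_right (hc pp) (hid t1)
  obtain ⟨m2, h2⟩ := evAff_min_right (hc (sm + pp - t1)) (hid sx)
  obtain ⟨m3, h3⟩ := evAff_min_right h1 h2
  obtain ⟨m4, h4⟩ := evAff_max_right (hc 0) h3
  exact ⟨m4, h4⟩

private lemma evAff_MI_left (sm sx pp t1 x : ℝ) :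
    ∃ m, ∀ᶠ t in 𝓝[Iic x] x, MI sm sx pp t1 t = MI sm sx pp t1 x + m * (t - x) := by
  have hc : ∀ (k : ℝ), ∀ᶠ t in 𝓝[Iic x] x,
      (fun _ : ℝ => k) t = (fun _ : ℝ => k) x + 0 * (t - x) :=
    fun k => Filter.Eventually.of_forall (fun t => by ring)
  have hid : ∀ (k : ℝ), ∀ᶠ t in 𝓝[Iic x] x,
      (fun s : ℝ => s - k) t = (fun s : ℝ => s - k) x + 1 * (t - x) :=
    fun k => Filter.Eventually.of_forall (fun t => by ring)
  obtain ⟨m1, h1⟩ := evAff_min_left (hc pp) (hid t1)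
  obtain ⟨m2, h2⟩ := evAff_min_left (hc (sm + pp - t1)) (hid sx)
  obtain ⟨m3, h3⟩ := evAff_min_left h1 h2
  obtain ⟨m4, h4⟩ := evAff_max_left (hc 0) h3
  exact ⟨m4, h4⟩

private lemma hasDeriv_of_evAff {f : ℝ → ℝ} {x m : ℝ} {s s' : Set ℝ} (hss : s' ⊆ s)
    (hf : ∀ᶠ t in 𝓝[s] x, f t = f x + m * (t - x)) :
    HasDerivWithinAt f m s' x := by
  have haff : HasDerivWithinAt (fun t => f x + m * (t - x)) m s' x := by
    simpa using (((hasDerivWithinAt_id x s').sub_const x).const_mul m).const_add (f x)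
  exact haff.congr_of_eventuallyEq (hf.filter_mono (nhdsWithin_mono x hss)) (by ring)

theorem slack_local_min {ι : Type*} (A : Finset ι)
    (sMin sMax p h : ι → ℝ) (C t1 : ℝ)
    (hs : ∀ a ∈ A, sMin a ≤ sMax a) (hp : ∀ a ∈ A, 0 ≤ p a)
    (hh : ∀ a ∈ A, 0 < h a) :
    Continuous (fun t2 => C * (t2 - t1) -
        ∑ a ∈ A, h a * MI (sMin a) (sMax a) (p a) t1 t2) ∧
    ∀ t2s : ℝ,
      IsLocalMin (fun t2 => C * (t2 - t1) -
        ∑ a ∈ A, h a * MI (sMin a) (sMax a) (p a) t1 t2) t2s →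
      leftD (fun t2 => C * (t2 - t1) -
        ∑ a ∈ A, h a * MI (sMin a) (sMax a) (p a) t1 t2) t2s < 0 →
      0 < rightD (fun t2 => C * (t2 - t1) -
        ∑ a ∈ A, h a * MI (sMin a) (sMax a) (p a) t1 t2) t2s →
      ∃ j ∈ A,
        leftD (fun t2 => MI (sMin j) (sMax j) (p j) t1 t2) t2s >
          rightD (fun t2 => MI (sMin j) (sMax j) (p j) t1 t2) t2s := by
  constructor
  · apply Continuous.sub
    · fun_prop
    · apply continuous_finset_sum
      intro a _
      apply continuous_const.mul
      unfold MI
      fun_prop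
  · intro x _ hL hR
    by_contra hcon
    push_neg at hcon
    -- one-sided derivatives of each MI
    have hdl : ∀ a : ι, HasDerivWithinAt (fun t2 => MI (sMin a) (sMax a) (p a) t1 t2)
        (leftD (fun t2 => MI (sMin a) (sMax a) (p a) t1 t2) x) (Iio x) x := by
      intro a
      obtain ⟨m, hm⟩ := evAff_MI_left (sMin a) (sMax a) (p a) t1 x
      have hd := hasDeriv_of_evAff (Iio_subset_Iic_self) hm
      have := hd.derivWithin (uniqueDiffWithinAt_Iio x)
      rw [leftD, this]
      exact hd
    have hdr : ∀ a : ι, HasDerivWithinAt (fun t2 => MI (sMin a) (sMax a) (p a) t1 t2)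
        (rightD (fun t2 => MI (sMin a) (sMax a) (p a) t1 t2) x) (Ioi x) x := by
      intro a
      obtain ⟨m, hm⟩ := evAff_MI_right (sMin a) (sMax a) (p a) t1 x
      have hd := hasDeriv_of_evAff (Ioi_subset_Ici_self) hm
      have := hd.derivWithin (uniqueDiffWithinAt_Ioi x)
      rw [rightD, this]
      exact hd
    -- derivative of the slack on each side
    have hSl : HasDerivWithinAt (fun t2 => C * (t2 - t1) -
        ∑ a ∈ A, h a * MI (sMin a) (sMax a) (p a) t1 t2)
        (C * 1 - ∑ a ∈ A, h a * leftD (fun t2 => MI (sMin a) (sMax a) (p a) t1 t2) x)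
        (Iio x) x := by
      exact (((hasDerivWithinAt_id x (Iio x)).sub_const t1).const_mul C).sub
        (HasDerivWithinAt.fun_sum fun a _ => (hdl a).const_mul (h a))
    have hSr : HasDerivWithinAt (fun t2 => C * (t2 - t1) -
        ∑ a ∈ A, h a * MI (sMin a) (sMax a) (p a) t1 t2)
        (C * 1 - ∑ a ∈ A, h a * rightD (fun t2 => MI (sMin a) (sMax a) (p a) t1 t2) x)
        (Ioi x) x := by
      exact (((hasDerivWithinAt_id x (Ioi x)).sub_const t1).const_mul C).sub
        (HasDerivWithinAt.fun_sum fun a _ => (hdr a).const_mul (h a))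
    have hLval := hSl.derivWithin (uniqueDiffWithinAt_Iio x)
    have hRval := hSr.derivWithin (uniqueDiffWithinAt_Ioi x)
    rw [leftD, hLval] at hL
    rw [rightD, hRval] at hR
    have hsum : ∑ a ∈ A, h a * leftD (fun t2 => MI (sMin a) (sMax a) (p a) t1 t2) x ≤
        ∑ a ∈ A, h a * rightD (fun t2 => MI (sMin a) (sMax a) (p a) t1 t2) x := by
      apply Finset.sum_le_sum
      intro a ha
      exact mul_le_mul_of_nonneg_left (hcon a ha) (hh a ha).le
    linarith
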